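/- Let V_n = ∪_{s0 ≤ s ≤ n} V^s be a strong non-overlapping set of strings over alphabet Σ, where V^s consists of the strings of length s and s0 ≥ 2. For each s fix distinct T^s, B^s ∈ V^s, and let 𝒱 be the set of all matrices with 2 ≤ h ≤ m rows and s columns (s0 ≤ s ≤ n) whose first row is T^s, last row is B^s, and whose inner rows lie in V^s \ {T^s, B^s}. Then 𝒱 is a strong non-overlapping set of matrices: every matrix in 𝒱 is self non-overlapping, and any two matrices in 𝒱 are strong non-overlapping. -/

import Mathlib

/-- The four sides (borders) of a matrix: top, bottom, left, right. -/
inductive Side | top | bottom | left | right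
  deriving DecidableEq

/-- A matrix over an alphabet `α`, with `rows × cols` relevant entries. -/
structure Mat (α : Type*) where
  rows : ℕ
  cols : ℕ
  entry : ℕ → ℕ → α

namespace Mat

/-- The `i`-th row of a matrix, as a string (list) of length `cols`. -/
def row {α : Type*} (A : Mat α) (i : ℕ) : List α :=
  (List.range A.cols).map (fun j => A.entry i j)

/-- Two matrices have the same content (same dimensions and same in-range entries). -/
def Same {α : Type*} (A B : Mat α) : Prop :=
  A.rows = B.rows ∧ A.cols = B.cols ∧
    ∀ i j, i < A.rows → j < A.cols → A.entry i j = B.entry i j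

end Mat

/-- A cut sequence partitioning `[0, m)` into `h` nonempty consecutive intervals. -/
def IsCuts (m h : ℕ) (r : Fin (h+1) → ℕ) : Prop :=
  r 0 = 0 ∧ r (Fin.last h) = m ∧ StrictMono r

/-- The frame of block `(i,j)` in a block partition with `h` block-rows and
`k` block-columns: which borders of the full matrix the block touches. -/
def frame (i h j k : ℕ) : Set Side :=
  {s | (s = Side.top ∧ i = 0) ∨ (s = Side.bottom ∧ i = h - 1) ∨
       (s = Side.left ∧ j = 0) ∨ (s = Side.right ∧ j = k - 1)}

/-- A witness that matrices `A` and `B` overlap via block partitions of `A`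
(with `h × k` blocks) and of `B` (with `h' × k'` blocks): a common block
`A_{ij} = B_{i'j'}` whose frames jointly cover `{t,b,l,r}`. -/
structure OverlapWitness {α : Type*} (A B : Mat α) (h k h' k' : ℕ) : Type where
  r : Fin (h+1) → ℕ
  c : Fin (k+1) → ℕ
  r' : Fin (h'+1) → ℕ
  c' : Fin (k'+1) → ℕ
  cutsR : IsCuts A.rows h r
  cutsC : IsCuts A.cols k c
  cutsR' : IsCuts B.rows h' r'
  cutsC' : IsCuts B.cols k' c'
  i : Fin h
  j : Fin k
  i' : Fin h'
  j' : Fin k'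
  sameHeight : r i.succ - r i.castSucc = r' i'.succ - r' i'.castSucc
  sameWidth : c j.succ - c j.castSucc = c' j'.succ - c' j'.castSucc
  blockEq : ∀ x y, x < r i.succ - r i.castSucc → y < c j.succ - c j.castSucc →
      A.entry (r i.castSucc + x) (c j.castSucc + y)
        = B.entry (r' i'.castSucc + x) (c' j'.castSucc + y)
  frames : frame i.val h j.val k ∪ frame i'.val h' j'.val k' = Set.univ

/-- `A` and `B` are overlapping matrices. -/
def Overlap {α : Type*} (A B : Mat α) : Prop :=
  ∃ h k h' k', Nonempty (OverlapWitness A B h k h' k')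

/-- `A` and `B` are strong non-overlapping matrices. -/
def StrongNonOverlappingMat {α : Type*} (A B : Mat α) : Prop := ¬ Overlap A B

/-- `A` is self non-overlapping: the only overlap of `A` with itself is the
trivial one where the common block is `A` itself. -/
def SelfNonOverlapping {α : Type*} (A : Mat α) : Prop :=
  ∀ h k h' k' (w : OverlapWitness A A h k h' k'),
    w.r w.i.succ - w.r w.i.castSucc = A.rows ∧
    w.c w.j.succ - w.c w.j.castSucc = A.cols

/-- `Borders v w`: some nonempty proper prefix of `v` equals a proper suffix of `w`. -/
def Borders {α : Type*} (v w : List α) : Prop :=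
  ∃ p : List α, p ≠ [] ∧ p <+: v ∧ p ≠ v ∧ p <:+ w ∧ p ≠ w

/-- A string is unbordered (self non-overlapping / bifix-free). -/
def Unbordered {α : Type*} (v : List α) : Prop := ¬ Borders v v

/-- Two strings are non-overlapping (cross bifix-free): no nonempty proper
prefix of one equals a proper suffix of the other. -/
def NonOverlappingStr {α : Type*} (v w : List α) : Prop :=
  ¬ Borders v w ∧ ¬ Borders w v

/-- `v` occurs as an inner factor of `w`: `w = a ++ v ++ b` with `a, b` not both empty. -/
def InnerFactor {α : Type*} (v w : List α) : Prop :=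
  ∃ a b : List α, (a ≠ [] ∨ b ≠ []) ∧ w = a ++ v ++ b

/-- Two strings are strong non-overlapping. -/
def StrongNonOverlappingStr {α : Type*} (v w : List α) : Prop :=
  NonOverlappingStr v w ∧ ¬ InnerFactor v w ∧ ¬ InnerFactor w v

/-- A strong non-overlapping set of strings. -/
def SNOSet {α : Type*} (W : Set (List α)) : Prop :=
  ∀ v ∈ W, ∀ w ∈ W, StrongNonOverlappingStr v w
section Helpers
variable {α : Type*}

/-- A segment of a "string" given by `f`, starting at `a`, of width `w`. -/
def seg (f : ℕ → α) (a w : ℕ) : List α := (List.range w).map (fun y => f (a + y))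

lemma seg_append (f : ℕ → α) (a w1 w2 : ℕ) :
    seg f a w1 ++ seg f (a + w1) w2 = seg f a (w1 + w2) := by
  simp only [seg, List.range_add, List.map_append, List.map_map]
  congr 1
  apply List.map_congr_left
  intro y _
  simp [Function.comp, Nat.add_assoc]

lemma seg_eq_nil {f : ℕ → α} {a w : ℕ} : seg f a w = [] ↔ w = 0 := by
  simp [seg, List.range_eq_nil]

lemma row_eq_seg (A : Mat α) (i : ℕ) : A.row i = seg (A.entry i) 0 A.cols := by
  simp [Mat.row, seg]

lemma seg_decomp (f : ℕ → α) {a b N : ℕ} (h1 : a ≤ b) (h2 : b ≤ N) :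
    seg f 0 N = seg f 0 a ++ seg f a (b - a) ++ seg f b (N - b) := by
  have e1 : seg f 0 a ++ seg f a (b - a) = seg f 0 b := by
    have := seg_append f 0 a (b - a)
    rwa [Nat.zero_add, Nat.add_sub_cancel' h1] at this
  have e2 : seg f 0 b ++ seg f b (N - b) = seg f 0 N := by
    have := seg_append f 0 b (N - b)
    rwa [Nat.zero_add, Nat.add_sub_cancel' h2] at this
  rw [List.append_assoc, ← e2, ← e1, List.append_assoc]

lemma cuts_lt {m h : ℕ} {r : Fin (h+1) → ℕ} (hc : IsCuts m h r) (i : Fin h) :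
    r i.castSucc < r i.succ := hc.2.2 (Fin.castSucc_lt_succ : i.castSucc < i.succ)

lemma cuts_le {m h : ℕ} {r : Fin (h+1) → ℕ} (hc : IsCuts m h r) (i : Fin h) :
    r i.succ ≤ m := hc.2.1 ▸ hc.2.2.monotone (Fin.le_last _)

lemma cuts_first {m h : ℕ} {r : Fin (h+1) → ℕ} (hc : IsCuts m h r) {i : Fin h}
    (hi : i.val = 0) : r i.castSucc = 0 := by
  have : i.castSucc = 0 := by
    apply Fin.ext; simpa using hi
  rw [this, hc.1]

lemma cuts_last {m h : ℕ} {r : Fin (h+1) → ℕ} (hc : IsCuts m h r) {i : Fin h}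
    (hi : i.val = h - 1) : r i.succ = m := by
  have hpos : 0 < h := i.pos
  have : i.succ = Fin.last h := by
    apply Fin.ext; simp [hi]; omega
  rw [this, hc.2.1]

/-- The key string-combinatorics step: two members of an SNO set sharing
a common nonempty factor that is "outer" on each relevant side must coincide. -/
lemma string_step {W : Set (List α)} (hSNO : SNOSet W)
    {v w p a1 b1 a2 b2 : List α} (hv : v ∈ W) (hw : w ∈ W)
    (hp : p ≠ []) (hv' : v = a1 ++ p ++ b1) (hw' : w = a2 ++ p ++ b2)
    (ha : a1 = [] ∨ a2 = []) (hb : b1 = [] ∨ b2 = []) :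
    a1 = [] ∧ b1 = [] ∧ a2 = [] ∧ b2 = [] := by
  have hS := hSNO v hv w hw
  by_cases h1 : a1 = [] ∧ b1 = []
  · obtain ⟨ha1, hb1⟩ := h1
    by_cases h2 : a2 = [] ∧ b2 = []
    · exact ⟨ha1, hb1, h2.1, h2.2⟩
    · exfalso
      apply hS.2.1
      refine ⟨a2, b2, ?_, ?_⟩
      · by_cases hx : a2 = []
        · exact Or.inr (fun hy => h2 ⟨hx, hy⟩)
        · exact Or.inl hx
      · rw [hw', hv', ha1, hb1]; simp
  · by_cases h2 : a2 = [] ∧ b2 = []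
    · exfalso
      apply hS.2.2
      refine ⟨a1, b1, ?_, ?_⟩
      · by_cases hx : a1 = []
        · exact Or.inr (fun hy => h1 ⟨hx, hy⟩)
        · exact Or.inl hx
      · rw [hv', hw', h2.1, h2.2]; simp
    · exfalso
      rcases ha with ha | ha <;> rcases hb with hb | hb
      · exact h1 ⟨ha, hb⟩
      · -- a1 = [], b2 = []: p proper prefix of v, proper suffix of w
        have hb1 : b1 ≠ [] := fun hy => h1 ⟨ha, hy⟩
        have ha2 : a2 ≠ [] := fun hy => h2 ⟨hy, hb⟩
        apply hS.1.1
        refine ⟨p, hp, ⟨b1, by rw [hv', ha]; simp⟩, ?_, ⟨a2, by rw [hw', hb]; simp⟩, ?_⟩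
        · intro hpv
          rw [ha, List.nil_append, ← hpv, List.self_eq_append_right] at hv'
          exact hb1 hv'
        · intro hpw
          rw [hb, List.append_nil, ← hpw, List.self_eq_append_left] at hw'
          exact ha2 hw'
      · -- a2 = [], b1 = []: p proper prefix of w, proper suffix of v
        have hb2 : b2 ≠ [] := fun hy => h2 ⟨ha, hy⟩
        have ha1 : a1 ≠ [] := fun hy => h1 ⟨hy, hb⟩
        apply hS.1.2
        refine ⟨p, hp, ⟨b2, by rw [hw', ha]; simp⟩, ?_, ⟨a1, by rw [hv', hb]; simp⟩, ?_⟩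
        · intro hpw
          rw [ha, List.nil_append, ← hpw, List.self_eq_append_right] at hw'
          exact hb2 hw'
        · intro hpv
          rw [hb, List.append_nil, ← hpv, List.self_eq_append_left] at hv'
          exact ha1 hv'
      · exact h2 ⟨ha, hb⟩

end Helpers
section Main
variable {α : Type*}

lemma rowW {s0 n : ℕ} {V : ℕ → Set (List α)} {T Bt : ℕ → List α}
    (hT : ∀ s, s0 ≤ s → s ≤ n → T s ∈ V s) (hBt : ∀ s, s0 ≤ s → s ≤ n → Bt s ∈ V s)
    {A : Mat α} (hs1 : s0 ≤ A.cols) (hs2 : A.cols ≤ n)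
    (htop : A.row 0 = T A.cols) (hbot : A.row (A.rows - 1) = Bt A.cols)
    (hinner : ∀ i, 0 < i → i < A.rows - 1 →
      A.row i ∈ V A.cols ∧ A.row i ≠ T A.cols ∧ A.row i ≠ Bt A.cols)
    {i : ℕ} (hi : i < A.rows) :
    A.row i ∈ {v : List α | ∃ s, s0 ≤ s ∧ s ≤ n ∧ v ∈ V s} := by
  refine ⟨A.cols, hs1, hs2, ?_⟩
  rcases Nat.eq_zero_or_pos i with h0 | h0
  · rw [h0, htop]; exact hT _ hs1 hs2
  by_cases hl : i = A.rows - 1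
  · rw [hl, hbot]; exact hBt _ hs1 hs2
  · exact (hinner i h0 (by omega)).1

lemma main_lemma {α : Type*} (s0 n m : ℕ)
    (V : ℕ → Set (List α))
    (hSNO : SNOSet {v | ∃ s, s0 ≤ s ∧ s ≤ n ∧ v ∈ V s})
    (T Bt : ℕ → List α)
    (hT : ∀ s, s0 ≤ s → s ≤ n → T s ∈ V s)
    (hBt : ∀ s, s0 ≤ s → s ≤ n → Bt s ∈ V s)
    (hTB : ∀ s, s0 ≤ s → s ≤ n → T s ≠ Bt s)
    (𝒱 : Set (Mat α))
    (h𝒱 : ∀ M : Mat α, M ∈ 𝒱 ↔ ∃ h s, 2 ≤ h ∧ h ≤ m ∧ s0 ≤ s ∧ s ≤ n ∧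
      M.rows = h ∧ M.cols = s ∧ M.row 0 = T s ∧ M.row (h - 1) = Bt s ∧
      ∀ i, 0 < i → i < h - 1 → M.row i ∈ V s ∧ M.row i ≠ T s ∧ M.row i ≠ Bt s)
    (A : Mat α) (hA : A ∈ 𝒱) (B : Mat α) (hB : B ∈ 𝒱)
    {h k h' k' : ℕ} (w : OverlapWitness A B h k h' k') :
    w.r w.i.succ - w.r w.i.castSucc = A.rows ∧
    w.c w.j.succ - w.c w.j.castSucc = A.cols ∧ A.Same B := by
  rw [h𝒱] at hA hB
  obtain ⟨hgtA, sA, hA2, hAm, hAs0, hAsn, hArows, hAcols, hAtop, hAbot, hAinner⟩ := hA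
  subst hArows; subst hAcols
  obtain ⟨hgtB, sB, hB2, hBm, hBs0, hBsn, hBrows, hBcols, hBtop, hBbot, hBinner⟩ := hB
  subst hBrows; subst hBcols
  obtain ⟨r, c, r', c', cR, cC, cR', cC', i, j, i', j', sameH, sameW, blockEq, frames⟩ := w
  dsimp only
  -- frame facts
  have hfr := Set.eq_univ_iff_forall.mp frames
  have htopF : i.val = 0 ∨ i'.val = 0 := by
    have := hfr Side.top; simpa [frame] using this
  have hbotF : i.val = h - 1 ∨ i'.val = h' - 1 := by
    have := hfr Side.bottom; simpa [frame] using this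
  have hleftF : j.val = 0 ∨ j'.val = 0 := by
    have := hfr Side.left; simpa [frame] using this
  have hrightF : j.val = k - 1 ∨ j'.val = k' - 1 := by
    have := hfr Side.right; simpa [frame] using this
  -- abbreviations
  set t := r i.succ - r i.castSucc with ht_def
  set wd := c j.succ - c j.castSucc with hwd_def
  have hrlt : r i.castSucc < r i.succ := cuts_lt cR i
  have hrle : r i.succ ≤ A.rows := cuts_le cR i
  have hrlt' : r' i'.castSucc < r' i'.succ := cuts_lt cR' i'
  have hrle' : r' i'.succ ≤ B.rows := cuts_le cR' i'
  have hclt : c j.castSucc < c j.succ := cuts_lt cC j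
  have hcle : c j.succ ≤ A.cols := cuts_le cC j
  have hclt' : c' j'.castSucc < c' j'.succ := cuts_lt cC' j'
  have hcle' : c' j'.succ ≤ B.cols := cuts_le cC' j'
  have eA : r i.castSucc + t = r i.succ := by omega
  have eB : r' i'.castSucc + t = r' i'.succ := by
    rw [sameH]; omega
  have eWA : c j.castSucc + wd = c j.succ := by omega
  have eWB : c' j'.castSucc + wd = c' j'.succ := by
    rw [sameW]; omega
  have htpos : 0 < t := by omega
  have hwdpos : 0 < wd := by omega
  -- row indices of the block's first rows
  have hriA : r i.castSucc < A.rows := lt_of_lt_of_le hrlt hrle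
  have hri'B : r' i'.castSucc < B.rows := lt_of_lt_of_le hrlt' hrle'
  have hvW := rowW hT hBt hAs0 hAsn hAtop hAbot hAinner hriA
  have hwW := rowW hT hBt hBs0 hBsn hBtop hBbot hBinner hri'B
  -- the common block row 0, as a string
  set f := A.entry (r i.castSucc) with hf_def
  set g := B.entry (r' i'.castSucc) with hg_def
  have hpp : seg f (c j.castSucc) wd = seg g (c' j'.castSucc) wd := by
    apply List.map_congr_left
    intro y hy
    have hy' := List.mem_range.mp hy
    have := blockEq 0 y htpos (by omega)
    simpa using this
  have hdecA : A.row (r i.castSucc) =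
      seg f 0 (c j.castSucc) ++ seg f (c j.castSucc) wd ++ seg f (c j.succ) (A.cols - c j.succ) := by
    rw [row_eq_seg, ← hf_def, seg_decomp f (le_of_lt hclt) hcle]
  have hdecB : B.row (r' i'.castSucc) =
      seg g 0 (c' j'.castSucc) ++ seg f (c j.castSucc) wd ++ seg g (c' j'.succ) (B.cols - c' j'.succ) := by
    rw [row_eq_seg, ← hg_def, seg_decomp g (le_of_lt hclt') hcle',
      show c' j'.succ - c' j'.castSucc = wd from sameW.symm, hpp]
  have hcolStep := string_step hSNO hvW hwW
    (p := seg f (c j.castSucc) wd) (by rw [Ne, seg_eq_nil]; omega) hdecA hdecB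
    (by rcases hleftF with hl | hl
        · exact Or.inl (seg_eq_nil.mpr (cuts_first cC hl))
        · exact Or.inr (seg_eq_nil.mpr (cuts_first cC' hl)))
    (by rcases hrightF with hl | hl
        · exact Or.inl (seg_eq_nil.mpr (by rw [cuts_last cC hl]; omega))
        · exact Or.inr (seg_eq_nil.mpr (by rw [cuts_last cC' hl]; omega)))
  obtain ⟨ca1, cb1, ca2, cb2⟩ := hcolStep
  rw [seg_eq_nil] at ca1 cb1 ca2 cb2
  have hcj0 : c j.castSucc = 0 := ca1
  have hcj'0 : c' j'.castSucc = 0 := ca2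
  have hwdA : wd = A.cols := by omega
  have hcols : A.cols = B.cols := by omega
  -- full-row equality on the block rows
  have hrowEq : ∀ x, x < t → A.row (r i.castSucc + x) = B.row (r' i'.castSucc + x) := by
    intro x hx
    unfold Mat.row
    rw [← hcols]
    apply List.map_congr_left
    intro y hy
    have hy' := List.mem_range.mp hy
    have := blockEq x y hx (by omega)
    rw [hcj0, hcj'0] at this
    simpa using this
  rw [← hcols] at hBtop hBbot hBinner hBs0 hBsn
  -- the vertical analysis
  have key : r i.castSucc = 0 ∧ r i.succ = A.rows ∧ r' i'.castSucc = 0 ∧ r' i'.succ = B.rows := by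
    by_cases hAfull : r i.castSucc = 0 ∧ r i.succ = A.rows
    · obtain ⟨h1, h2⟩ := hAfull
      by_cases hBfull : r' i'.castSucc = 0 ∧ r' i'.succ = B.rows
      · exact ⟨h1, h2, hBfull.1, hBfull.2⟩
      exfalso
      have ht2 : t = A.rows := by omega
      by_cases hb0 : r' i'.castSucc = 0
      · have hlt : r' i'.succ < B.rows := lt_of_le_of_ne hrle' (fun hx => hBfull ⟨hb0, hx⟩)
        have hre := hrowEq (t-1) (by omega)
        rw [h1, hb0] at hre
        simp only [Nat.zero_add] at hre
        rw [show t - 1 = A.rows - 1 from by omega, hAbot] at hre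
        exact (hBinner (A.rows - 1) (by omega) (by omega)).2.2 hre.symm
      · have h0 : 0 < r' i'.castSucc := Nat.pos_of_ne_zero hb0
        have hre := hrowEq 0 (by omega)
        rw [h1] at hre
        simp only [Nat.add_zero, Nat.zero_add] at hre
        rw [hAtop] at hre
        exact (hBinner _ h0 (by omega)).2.1 hre.symm
    by_cases hBfull : r' i'.castSucc = 0 ∧ r' i'.succ = B.rows
    · exfalso
      obtain ⟨h1, h2⟩ := hBfull
      have ht2 : t = B.rows := by omega
      by_cases ha0 : r i.castSucc = 0
      · have hlt : r i.succ < A.rows := lt_of_le_of_ne hrle (fun hx => hAfull ⟨ha0, hx⟩)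
        have hre := hrowEq (t-1) (by omega)
        rw [h1, ha0] at hre
        simp only [Nat.zero_add] at hre
        rw [show t - 1 = B.rows - 1 from by omega, hBbot] at hre
        exact (hAinner (B.rows - 1) (by omega) (by omega)).2.2 hre
      · have h0 : 0 < r i.castSucc := Nat.pos_of_ne_zero ha0
        have hre := hrowEq 0 (by omega)
        rw [h1] at hre
        simp only [Nat.add_zero, Nat.zero_add] at hre
        rw [hBtop] at hre
        exact (hAinner _ h0 (by omega)).2.1 hre
    exfalso
    rcases htopF with h1 | h1 <;> rcases hbotF with h2 | h2
    · exact hAfull ⟨cuts_first cR h1, cuts_last cR h2⟩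
    · -- A touches top, B touches bottom
      have h1' := cuts_first cR h1
      have h2' := cuts_last cR' h2
      have hlt : r i.succ < A.rows := lt_of_le_of_ne hrle (fun hx => hAfull ⟨h1', hx⟩)
      have hre := hrowEq (t-1) (by omega)
      rw [h1'] at hre
      simp only [Nat.zero_add] at hre
      rw [show r' i'.castSucc + (t-1) = B.rows - 1 from by omega, hBbot] at hre
      by_cases h1t : t = 1
      · rw [show t - 1 = 0 from by omega, hAtop] at hre
        exact hTB A.cols hAs0 hAsn hre
      · exact (hAinner (t-1) (by omega) (by omega)).2.2 hre
    · -- B touches top, A touches bottom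
      have h1' := cuts_first cR' h1
      have h2' := cuts_last cR h2
      have hlt : r' i'.succ < B.rows := lt_of_le_of_ne hrle' (fun hx => hBfull ⟨h1', hx⟩)
      have hre := hrowEq (t-1) (by omega)
      rw [h1'] at hre
      simp only [Nat.zero_add] at hre
      rw [show r i.castSucc + (t-1) = A.rows - 1 from by omega, hAbot] at hre
      by_cases h1t : t = 1
      · rw [show t - 1 = 0 from by omega, hBtop] at hre
        exact hTB A.cols hAs0 hAsn hre.symm
      · exact (hBinner (t-1) (by omega) (by omega)).2.2 hre.symm
    · exact hBfull ⟨cuts_first cR' h1, cuts_last cR' h2⟩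
  obtain ⟨k1, k2, k3, k4⟩ := key
  refine ⟨by omega, hwdA, by omega, hcols, fun x y hx hy => ?_⟩
  have := blockEq x y (by omega) (by omega)
  rw [k1, k3, hcj0, hcj'0] at this
  simpa using this

end Main

/-- The construction of the paper: matrices with `2 ≤ h ≤ m` rows and
`s0 ≤ s ≤ n` columns, rows from `V s`, fixed distinct top row `T s` and bottom
row `Bt s`, inner rows avoiding them, form a strong non-overlapping set of
matrices: each matrix is self non-overlapping, and any two (distinct) matrices
are strong non-overlapping. -/
theorem stmt3 {α : Type*} (s0 n m : ℕ) (hs0 : 2 ≤ s0)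
    (V : ℕ → Set (List α)) (hlen : ∀ s, ∀ v ∈ V s, v.length = s)
    (hSNO : SNOSet {v | ∃ s, s0 ≤ s ∧ s ≤ n ∧ v ∈ V s})
    (T Bt : ℕ → List α)
    (hT : ∀ s, s0 ≤ s → s ≤ n → T s ∈ V s)
    (hBt : ∀ s, s0 ≤ s → s ≤ n → Bt s ∈ V s)
    (hTB : ∀ s, s0 ≤ s → s ≤ n → T s ≠ Bt s)
    (𝒱 : Set (Mat α))
    (h𝒱 : ∀ M : Mat α, M ∈ 𝒱 ↔ ∃ h s, 2 ≤ h ∧ h ≤ m ∧ s0 ≤ s ∧ s ≤ n ∧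
      M.rows = h ∧ M.cols = s ∧ M.row 0 = T s ∧ M.row (h - 1) = Bt s ∧
      ∀ i, 0 < i → i < h - 1 → M.row i ∈ V s ∧ M.row i ≠ T s ∧ M.row i ≠ Bt s) :
    (∀ A ∈ 𝒱, SelfNonOverlapping A) ∧
    (∀ A ∈ 𝒱, ∀ B ∈ 𝒱, ¬ A.Same B → StrongNonOverlappingMat A B) := by
  constructor
  · intro A hA h k h' k' w
    have := main_lemma s0 n m V hSNO T Bt hT hBt hTB 𝒱 h𝒱 A hA A hA w
    exact ⟨this.1, this.2.1⟩
  · intro A hA B hB hSame hOv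
    obtain ⟨h, k, h', k', ⟨w⟩⟩ := hOv
    exact hSame (main_lemma s0 n m V hSNO T Bt hT hBt hTB 𝒱 h𝒱 A hA B hB w).2.2
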